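/- arXiv:2410.02596 — 6 statements merged into one kernel-verified Lean document; each statement's English description precedes it below -/
import Mathlib

section
/- Let α be a nonempty finite type, let g : ℝ → ℝ be continuously differentiable, and define f₁(t) = t · ∫_1^t g'(log s)/s² ds for t > 0. Let p : α → ℝ satisfy p(x) > 0 for every x, and let q : ℝ → α → ℝ satisfy q(θ)(x) > 0 for all θ and x, with θ ↦ q(θ)(x) differentiable for each x. Then for every θ₀ ∈ ℝ, the function θ ↦ ∑_{x} q(θ)(x) · f₁(p(x)/q(θ)(x)) is differentiable at θ₀ with derivative equal to −∑_{x} g'(log(p(x)/q(θ₀)(x))) · q'(θ₀)(x), where q'(θ₀)(x) denotes the derivative of θ ↦ q(θ)(x) at θ₀; equivalently, this derivative equals ∑_{x} q(θ₀)(x) · (d/dθ)|_{θ=θ₀} g(log(p(x)/q(θ)(x))). -/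
open Real Finset

theorem stmt_0 {α : Type*} [Fintype α] [Nonempty α]
    (g : ℝ → ℝ) (hg : ContDiff ℝ 1 g)
    (f₁ : ℝ → ℝ) (hf₁ : ∀ t > (0:ℝ), f₁ t = t * ∫ s in (1:ℝ)..t, deriv g (Real.log s) / s ^ 2)
    (p : α → ℝ) (hp : ∀ x, 0 < p x)
    (q : ℝ → α → ℝ) (hq : ∀ θ x, 0 < q θ x)
    (hqdiff : ∀ x, Differentiable ℝ (fun θ => q θ x)) :
    ∀ θ₀ : ℝ,
      HasDerivAt (fun θ => ∑ x, q θ x * f₁ (p x / q θ x))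
        (-∑ x, deriv g (Real.log (p x / q θ₀ x)) * deriv (fun θ => q θ x) θ₀) θ₀ ∧
      (-∑ x, deriv g (Real.log (p x / q θ₀ x)) * deriv (fun θ => q θ x) θ₀)
        = ∑ x, q θ₀ x * deriv (fun θ => g (Real.log (p x / q θ x))) θ₀ := by
  intro θ₀
  set h : ℝ → ℝ := fun s => deriv g (Real.log s) / s ^ 2 with hh
  have hgc : Continuous (deriv g) := hg.continuous_deriv le_rfl
  have hgd : Differentiable ℝ g := hg.differentiable one_ne_zero
  have hcontAt : ∀ s : ℝ, 0 < s → ContinuousAt h s := by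
    intro s hs
    exact ((hgc.continuousAt).comp (Real.continuousAt_log hs.ne')).div
      ((continuous_pow 2).continuousAt) (pow_ne_zero 2 hs.ne')
  have hmeas : Measurable h :=
    ((measurable_deriv g).comp Real.measurable_log).div ((measurable_id.pow_const 2))
  set I : ℝ → ℝ := fun t => ∫ s in (1:ℝ)..t, h s with hI
  have hIder : ∀ t : ℝ, 0 < t → HasDerivAt I (h t) t := by
    intro t ht
    have hsub : Set.uIcc (1:ℝ) t ⊆ {s : ℝ | 0 < s} := by
      intro s hs
      rcases Set.mem_uIcc.mp hs with ⟨h1, _⟩ | ⟨h1, _⟩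
      · exact lt_of_lt_of_le one_pos h1
      · exact lt_of_lt_of_le ht h1
    have hint : IntervalIntegrable h MeasureTheory.volume 1 t :=
      (ContinuousOn.intervalIntegrable (fun s hs => (hcontAt s (hsub hs)).continuousWithinAt))
    exact intervalIntegral.integral_hasDerivAt_right hint
      (hmeas.stronglyMeasurable.stronglyMeasurableAtFilter)
      (hcontAt t ht)
  set F : ℝ → ℝ := fun t => t * I t with hF
  have hFeq : ∀ t : ℝ, 0 < t → f₁ t = F t := fun t ht => hf₁ t ht
  have hFder : ∀ t : ℝ, 0 < t → HasDerivAt F (I t + t * h t) t := by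
    intro t ht
    have := (hasDerivAt_id t).mul (hIder t ht)
    simp at this
    exact this
  -- per-x derivative
  have key : ∀ x : α, HasDerivAt (fun θ => q θ x * f₁ (p x / q θ x))
      (-(deriv g (Real.log (p x / q θ₀ x)) * deriv (fun θ => q θ x) θ₀)) θ₀ := by
    intro x
    set u : ℝ → ℝ := fun θ => q θ x with hu
    have hu0 : 0 < u θ₀ := hq θ₀ x
    have hud : HasDerivAt u (deriv u θ₀) θ₀ := (hqdiff x θ₀).hasDerivAt
    set u' := deriv u θ₀
    set c := p x with hc
    have hc0 : 0 < c := hp x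
    set t₀ := c / u θ₀ with ht₀
    have ht₀0 : 0 < t₀ := div_pos hc0 hu0
    have hratio : HasDerivAt (fun θ => c / u θ) (-(c * u') / (u θ₀)^2) θ₀ := by
      have := (hasDerivAt_const θ₀ c).div hud hu0.ne'
      simp at this
      exact this
    have hcomp : HasDerivAt (fun θ => F (c / u θ))
        ((I t₀ + t₀ * h t₀) * (-(c * u') / (u θ₀)^2)) θ₀ :=
      by have := (hFder t₀ ht₀0).comp θ₀ hratio; exact this
    have hprod : HasDerivAt (fun θ => u θ * F (c / u θ))
        (u' * F t₀ + u θ₀ * ((I t₀ + t₀ * h t₀) * (-(c * u') / (u θ₀)^2))) θ₀ :=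
      hud.mul hcomp
    have heqfun : (fun θ => u θ * f₁ (c / u θ)) = (fun θ => u θ * F (c / u θ)) := by
      funext θ
      rw [hFeq _ (div_pos hc0 (hq θ x))]
    have hval : u' * F t₀ + u θ₀ * ((I t₀ + t₀ * h t₀) * (-(c * u') / (u θ₀)^2))
        = -(deriv g (Real.log t₀) * u') := by
      have hht : h t₀ = deriv g (Real.log t₀) / t₀ ^ 2 := rfl
      have hFt : F t₀ = t₀ * I t₀ := rfl
      rw [hht, hFt, ht₀]
      field_simp
      ring
    rw [heqfun]
    simpa [hval] using hprod
  constructor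
  · have := HasDerivAt.fun_sum (u := Finset.univ)
      (A := fun x θ => q θ x * f₁ (p x / q θ x))
      (A' := fun x => -(deriv g (Real.log (p x / q θ₀ x)) * deriv (fun θ => q θ x) θ₀))
      (fun x _ => key x)
    simpa [Finset.sum_neg_distrib] using this
  · rw [neg_eq_iff_eq_neg, ← Finset.sum_neg_distrib]
    apply Finset.sum_congr rfl
    intro x _
    set u : ℝ → ℝ := fun θ => q θ x with hu
    have hu0 : 0 < u θ₀ := hq θ₀ x
    have hud : HasDerivAt u (deriv u θ₀) θ₀ := (hqdiff x θ₀).hasDerivAt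
    set u' := deriv u θ₀
    set c := p x with hc
    have hc0 : 0 < c := hp x
    have ht₀0 : 0 < c / u θ₀ := div_pos hc0 hu0
    have hratio : HasDerivAt (fun θ => c / u θ) (-(c * u') / (u θ₀)^2) θ₀ := by
      have := (hasDerivAt_const θ₀ c).div hud hu0.ne'
      simp at this
      exact this
    have hlog : HasDerivAt (fun θ => Real.log (c / u θ))
        ((c / u θ₀)⁻¹ * (-(c * u') / (u θ₀)^2)) θ₀ := by
      have := (Real.hasDerivAt_log ht₀0.ne').comp θ₀ hratio
      exact this
    have hgl : HasDerivAt (fun θ => g (Real.log (c / u θ)))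
        (deriv g (Real.log (c / u θ₀)) * ((c / u θ₀)⁻¹ * (-(c * u') / (u θ₀)^2))) θ₀ := by
      have := (hgd (Real.log (c / u θ₀))).hasDerivAt.comp θ₀ hlog
      exact this
    rw [hgl.deriv]
    field_simp
    ring
end

section
/- Let α be a nonempty finite type, let g : ℝ → ℝ be differentiable, and define f₃(t) = t · g(log t) for t > 0. Let p : α → ℝ satisfy p(x) > 0 for every x, and let q : ℝ → α → ℝ satisfy q(θ)(x) > 0 for all θ and x, with θ ↦ q(θ)(x) differentiable for each x. Then for every θ₀ ∈ ℝ, the function θ ↦ ∑_{x} q(θ)(x) · f₃(p(x)/q(θ)(x)) is differentiable at θ₀ with derivative equal to −∑_{x} (p(x)/q(θ₀)(x)) · g'(log(p(x)/q(θ₀)(x))) · q'(θ₀)(x), where q'(θ₀)(x) denotes the derivative of θ ↦ q(θ)(x) at θ₀; equivalently, this derivative equals ∑_{x} p(x) · (d/dθ)|_{θ=θ₀} g(log(p(x)/q(θ)(x))). -/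
open Real Finset

lemma aux_hasDeriv (g : ℝ → ℝ) (hg : Differentiable ℝ g)
    (c : ℝ) (hc : 0 < c) (u : ℝ → ℝ) (hu : ∀ θ, 0 < u θ)
    (θ₀ : ℝ) (hd : HasDerivAt u (deriv u θ₀) θ₀) :
    HasDerivAt (fun θ => g (Real.log (c / u θ)))
      (deriv g (Real.log (c / u θ₀)) * (-(deriv u θ₀ / u θ₀))) θ₀ := by
  have hlog : HasDerivAt (fun θ => Real.log (c / u θ)) (-(deriv u θ₀ / u θ₀)) θ₀ := by
    have h1 : (fun θ => Real.log (c / u θ)) = fun θ => Real.log c - Real.log (u θ) := by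
      funext θ
      rw [Real.log_div hc.ne' (hu θ).ne']
    rw [h1]
    have h2 : HasDerivAt (fun θ => Real.log (u θ)) ((u θ₀)⁻¹ * deriv u θ₀) θ₀ :=
      (Real.hasDerivAt_log (hu θ₀).ne').comp θ₀ hd
    have := (hasDerivAt_const θ₀ (Real.log c)).sub h2
    refine this.congr_deriv ?_
    ring
  exact ((hg (Real.log (c / u θ₀))).hasDerivAt).comp θ₀ hlog

theorem stmt_1 {α : Type*} [Fintype α] [Nonempty α]
    (g : ℝ → ℝ) (hg : Differentiable ℝ g)
    (f₃ : ℝ → ℝ) (hf₃ : ∀ t > (0:ℝ), f₃ t = t * g (Real.log t))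
    (p : α → ℝ) (hp : ∀ x, 0 < p x)
    (q : ℝ → α → ℝ) (hq : ∀ θ x, 0 < q θ x)
    (hqdiff : ∀ x, Differentiable ℝ (fun θ => q θ x)) :
    ∀ θ₀ : ℝ,
      HasDerivAt (fun θ => ∑ x, q θ x * f₃ (p x / q θ x))
        (-∑ x, (p x / q θ₀ x) * deriv g (Real.log (p x / q θ₀ x)) * deriv (fun θ => q θ x) θ₀) θ₀ ∧
      (-∑ x, (p x / q θ₀ x) * deriv g (Real.log (p x / q θ₀ x)) * deriv (fun θ => q θ x) θ₀)
        = ∑ x, p x * deriv (fun θ => g (Real.log (p x / q θ x))) θ₀ := by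
  intro θ₀
  have key : ∀ x : α, HasDerivAt (fun θ => g (Real.log (p x / q θ x)))
      (deriv g (Real.log (p x / q θ₀ x)) * (-(deriv (fun θ => q θ x) θ₀ / q θ₀ x))) θ₀ :=
    fun x => aux_hasDeriv g hg (p x) (hp x) (fun θ => q θ x) (fun θ => hq θ x) θ₀
      ((hqdiff x θ₀).hasDerivAt)
  have heq : (fun θ => ∑ x, q θ x * f₃ (p x / q θ x))
      = fun θ => ∑ x : α, p x * g (Real.log (p x / q θ x)) := by
    funext θ
    apply Finset.sum_congr rfl
    intro x _
    rw [hf₃ _ (div_pos (hp x) (hq θ x))]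
    field_simp
    rw [mul_assoc]
    exact mul_div_cancel_left₀ _ (hq θ x).ne'
  have hderiv : ∀ x : α,
      deriv (fun θ => g (Real.log (p x / q θ x))) θ₀
        = deriv g (Real.log (p x / q θ₀ x)) * (-(deriv (fun θ => q θ x) θ₀ / q θ₀ x)) :=
    fun x => (key x).deriv
  constructor
  · rw [heq]
    have := HasDerivAt.fun_sum (u := Finset.univ) (fun x _ => ((key x).const_mul (p x)))
    refine this.congr_deriv ?_
    symm
    rw [neg_eq_iff_eq_neg, ← Finset.sum_neg_distrib]
    apply Finset.sum_congr rfl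
    intro x _
    have hqx := (hq θ₀ x).ne'
    field_simp
  · rw [neg_eq_iff_eq_neg, ← Finset.sum_neg_distrib]
    apply Finset.sum_congr rfl
    intro x _
    rw [hderiv x]
    have hqx := (hq θ₀ x).ne'
    field_simp
end

section
/- Let α be a nonempty finite type, let g : ℝ → ℝ be continuously differentiable, and define f₄(t) = ∫_1^t g'(log s) ds for t > 0. Let q : α → ℝ satisfy q(x) > 0 for every x, and let p : ℝ → α → ℝ satisfy p(θ)(x) > 0 for all θ and x, with θ ↦ p(θ)(x) differentiable for each x. Then for every θ₀ ∈ ℝ, the function θ ↦ ∑_{x} q(x) · f₄(p(θ)(x)/q(x)) is differentiable at θ₀ with derivative equal to ∑_{x} g'(log(p(θ₀)(x)/q(x))) · p'(θ₀)(x), where p'(θ₀)(x) denotes the derivative of θ ↦ p(θ)(x) at θ₀; equivalently, this derivative equals ∑_{x} p(θ₀)(x) · (d/dθ)|_{θ=θ₀} g(log(p(θ)(x)/q(x))). -/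
open Real Finset

lemma ftc_aux (g : ℝ → ℝ) (hg : ContDiff ℝ 1 g) {t₀ : ℝ} (ht : 0 < t₀) :
    HasDerivAt (fun t => ∫ s in (1:ℝ)..t, deriv g (Real.log s))
      (deriv g (Real.log t₀)) t₀ := by
  have hcont : ContinuousOn (fun s => deriv g (Real.log s)) (Set.Ioi 0) := by
    apply (hg.continuous_deriv le_rfl).comp_continuousOn
    exact Real.continuousOn_log.mono (fun x hx => ne_of_gt hx)
  have hsub : Set.uIcc (1:ℝ) t₀ ⊆ Set.Ioi 0 := by
    intro s hs
    have := hs.1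
    have h1 : (0:ℝ) < min 1 t₀ := lt_min one_pos ht
    exact lt_of_lt_of_le h1 this
  exact intervalIntegral.integral_hasDerivAt_right
    ((hcont.mono hsub).intervalIntegrable)
    (hcont.stronglyMeasurableAtFilter isOpen_Ioi t₀ ht)
    (hcont.continuousAt (Ioi_mem_nhds ht))

theorem stmt_2 {α : Type*} [Fintype α] [Nonempty α]
    (g : ℝ → ℝ) (hg : ContDiff ℝ 1 g)
    (f₄ : ℝ → ℝ) (hf₄ : ∀ t > (0:ℝ), f₄ t = ∫ s in (1:ℝ)..t, deriv g (Real.log s))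
    (q : α → ℝ) (hq : ∀ x, 0 < q x)
    (p : ℝ → α → ℝ) (hp : ∀ θ x, 0 < p θ x)
    (hpdiff : ∀ x, Differentiable ℝ (fun θ => p θ x)) :
    ∀ θ₀ : ℝ,
      HasDerivAt (fun θ => ∑ x, q x * f₄ (p θ x / q x))
        (∑ x, deriv g (Real.log (p θ₀ x / q x)) * deriv (fun θ => p θ x) θ₀) θ₀ ∧
      (∑ x, deriv g (Real.log (p θ₀ x / q x)) * deriv (fun θ => p θ x) θ₀)
        = ∑ x, p θ₀ x * deriv (fun θ => g (Real.log (p θ x / q x))) θ₀ := by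
  intro θ₀
  have hratio : ∀ θ x, 0 < p θ x / q x := fun θ x => div_pos (hp θ x) (hq x)
  constructor
  · apply HasDerivAt.fun_sum
    intro x _
    have hpx : HasDerivAt (fun θ => p θ x) (deriv (fun θ => p θ x) θ₀) θ₀ :=
      (hpdiff x θ₀).hasDerivAt
    have hdiv : HasDerivAt (fun θ => p θ x / q x)
        (deriv (fun θ => p θ x) θ₀ / q x) θ₀ := hpx.div_const _
    have hF : HasDerivAt (fun θ => ∫ s in (1:ℝ)..(p θ x / q x), deriv g (Real.log s))
        (deriv g (Real.log (p θ₀ x / q x)) * (deriv (fun θ => p θ x) θ₀ / q x)) θ₀ :=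
      by have := (ftc_aux g hg (hratio θ₀ x)).comp θ₀ hdiv; exact this
    have heq : (fun θ => q x * f₄ (p θ x / q x)) =
        fun θ => q x * ∫ s in (1:ℝ)..(p θ x / q x), deriv g (Real.log s) := by
      funext θ; rw [hf₄ _ (hratio θ x)]
    rw [heq]
    have := hF.const_mul (q x)
    convert this using 1
    · rfl
    rw [mul_comm (q x) _, mul_assoc, div_mul_cancel₀ _ (hq x).ne']
  · apply Finset.sum_congr rfl
    intro x _
    have hpx : HasDerivAt (fun θ => p θ x) (deriv (fun θ => p θ x) θ₀) θ₀ :=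
      (hpdiff x θ₀).hasDerivAt
    have hdiv : HasDerivAt (fun θ => p θ x / q x)
        (deriv (fun θ => p θ x) θ₀ / q x) θ₀ := hpx.div_const _
    have hlog : HasDerivAt (fun θ => Real.log (p θ x / q x))
        ((deriv (fun θ => p θ x) θ₀ / q x) / (p θ₀ x / q x)) θ₀ :=
      hdiv.log (ne_of_gt (hratio θ₀ x))
    have hgd : HasDerivAt g (deriv g (Real.log (p θ₀ x / q x)))
        (Real.log (p θ₀ x / q x)) :=
      (hg.differentiable one_ne_zero _).hasDerivAt
    have hcomp : HasDerivAt (fun θ => g (Real.log (p θ x / q x)))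
        (deriv g (Real.log (p θ₀ x / q x)) * ((deriv (fun θ => p θ x) θ₀ / q x) / (p θ₀ x / q x))) θ₀ :=
      by have := hgd.comp θ₀ hlog; exact this
    rw [hcomp.deriv]
    have hq' := (hq x).ne'
    have hp' := (hp θ₀ x).ne'
    field_simp
end

section
/- Let g : ℝ → ℝ be continuously differentiable, and define f₁(t) = t · ∫_1^t g'(log s)/s² ds for t > 0. Then for every t > 0, f₁ is differentiable at t with derivative f₁'(t) = ∫_1^t g'(log s)/s² ds + g'(log t)/t, and consequently f₁(t) − t · f₁'(t) = −g'(log t). -/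
open Real

theorem stmt_3 (g : ℝ → ℝ) (hg : ContDiff ℝ 1 g)
    (f₁ : ℝ → ℝ) (hf₁ : ∀ t > (0:ℝ), f₁ t = t * ∫ s in (1:ℝ)..t, deriv g (Real.log s) / s ^ 2) :
    ∀ t > (0:ℝ),
      HasDerivAt f₁ ((∫ s in (1:ℝ)..t, deriv g (Real.log s) / s ^ 2) + deriv g (Real.log t) / t) t ∧
      f₁ t - t * ((∫ s in (1:ℝ)..t, deriv g (Real.log s) / s ^ 2) + deriv g (Real.log t) / t)
        = -deriv g (Real.log t) := by
  intro t ht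
  have hne : t ≠ 0 := ne_of_gt ht
  set h : ℝ → ℝ := fun s => deriv g (Real.log s) / s ^ 2 with hh
  have hdc : Continuous (deriv g) := hg.continuous_deriv le_rfl
  have hcontOn : ContinuousOn h (Set.Ioi (0:ℝ)) := by
    apply ContinuousOn.div
    · exact hdc.comp_continuousOn (Real.continuousOn_log.mono fun x hx => ne_of_gt hx)
    · exact (continuous_pow 2).continuousOn
    · intro x hx; exact pow_ne_zero 2 (ne_of_gt hx)
  have hsub : Set.uIcc (1:ℝ) t ⊆ Set.Ioi 0 := by
    intro x hx
    have := hx.1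
    have h1 : (0:ℝ) < min 1 t := lt_min one_pos ht
    exact lt_of_lt_of_le h1 this
  have hInt : IntervalIntegrable h MeasureTheory.volume 1 t :=
    (hcontOn.mono hsub).intervalIntegrable
  have hca : ContinuousAt h t := by
    apply ContinuousOn.continuousAt hcontOn (Ioi_mem_nhds ht)
  have hF : HasDerivAt (fun u => ∫ s in (1:ℝ)..u, h s) (h t) t :=
    intervalIntegral.integral_hasDerivAt_right hInt
      (hcontOn.stronglyMeasurableAtFilter isOpen_Ioi t ht) hca
  have hprod : HasDerivAt (fun u => u * ∫ s in (1:ℝ)..u, h s)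
      ((∫ s in (1:ℝ)..t, h s) + deriv g (Real.log t) / t) t := by
    have := (hasDerivAt_id t).mul hF
    simp only [Pi.mul_def, id_eq, one_mul] at this
    refine this.congr_deriv ?_
    simp only [hh]
    field_simp
  have hev : f₁ =ᶠ[nhds t] fun u => u * ∫ s in (1:ℝ)..u, h s := by
    filter_upwards [Ioi_mem_nhds ht] with u hu
    exact hf₁ u hu
  refine ⟨hprod.congr_of_eventuallyEq hev, ?_⟩
  rw [hf₁ t ht]
  have h2 : t * (deriv g (Real.log t) / t) = deriv g (Real.log t) := by
    field_simp
  rw [mul_add, h2]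
  ring
end

section
/- Let g : ℝ → ℝ be twice continuously differentiable, and define f₁(t) = t · ∫_1^t g'(log s)/s² ds for t > 0. Then: (i) f₁(1) = 0; (ii) f₁ is differentiable at 1 with f₁'(1) = g'(0); (iii) for every t > 0, f₁ is twice differentiable at t with f₁''(t) = g''(log t)/t²; and (iv) f₁ is convex on the interval (0, ∞) if and only if g is convex on ℝ. -/
open Real

private lemma aux_deriv_nonneg {φ : ℝ → ℝ} {s : Set ℝ} (hso : IsOpen s)
    (hm : MonotoneOn φ s) {t c : ℝ} (ht : t ∈ s) (hd : HasDerivAt φ c t) : 0 ≤ c := by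
  have h1 : Filter.Tendsto (slope φ t) (nhdsWithin t (Set.Ioi t)) (nhds c) :=
    (hasDerivAt_iff_tendsto_slope.mp hd).mono_left
      (nhdsWithin_mono _ fun y hy => ne_of_gt hy)
  refine ge_of_tendsto h1 ?_
  have hmem : s ∩ Set.Ioi t ∈ nhdsWithin t (Set.Ioi t) :=
    Filter.inter_mem (nhdsWithin_le_nhds (hso.mem_nhds ht)) self_mem_nhdsWithin
  filter_upwards [hmem] with y hy
  obtain ⟨hys, hyt⟩ := hy
  rw [slope_def_field]
  exact div_nonneg (sub_nonneg.2 (hm ht hys (le_of_lt hyt))) (sub_nonneg.2 hyt.le)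

theorem stmt_5 (g : ℝ → ℝ) (hg : ContDiff ℝ 2 g)
    (f₁ : ℝ → ℝ) (hf₁ : ∀ t > (0:ℝ), f₁ t = t * ∫ s in (1:ℝ)..t, deriv g (Real.log s) / s ^ 2) :
    f₁ 1 = 0 ∧
    HasDerivAt f₁ (deriv g 0) 1 ∧
    (∀ t > (0:ℝ), HasDerivAt (deriv f₁) (deriv (deriv g) (Real.log t) / t ^ 2) t) ∧
    (ConvexOn ℝ (Set.Ioi (0:ℝ)) f₁ ↔ ConvexOn ℝ Set.univ g) := by
  -- basic regularity facts
  have hg2 : ContDiff ℝ ((1:WithTop ℕ∞) + 1) g := by norm_num at hg ⊢; exact hg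
  have hdg1 : ContDiff ℝ 1 (deriv g) := (contDiff_succ_iff_deriv.mp hg2).2.2
  have hdgd : Differentiable ℝ (deriv g) := hdg1.differentiable one_ne_zero
  have hdgc : Continuous (deriv g) := hdgd.continuous
  have hddgc : Continuous (deriv (deriv g)) :=
    (contDiff_one_iff_deriv.mp hdg1).2
  set h : ℝ → ℝ := fun s => deriv g (Real.log s) / s ^ 2 with hh
  have hcontAt : ∀ t > (0:ℝ), ContinuousAt h t := by
    intro t ht
    exact ((hdgc.continuousAt).comp (Real.continuousAt_log ht.ne')).div
      (continuousAt_pow _ _) (pow_ne_zero _ ht.ne')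
  have hconth : ContinuousOn h (Set.Ioi 0) := fun t ht => (hcontAt t ht).continuousWithinAt
  set F : ℝ → ℝ := fun u => ∫ s in (1:ℝ)..u, h s with hF
  have hint : ∀ t > (0:ℝ), IntervalIntegrable h MeasureTheory.volume 1 t := by
    intro t ht
    apply ContinuousOn.intervalIntegrable
    exact hconth.mono fun s hs => lt_of_lt_of_le (lt_min one_pos ht) hs.1
  have hFd : ∀ t > (0:ℝ), HasDerivAt F (h t) t := by
    intro t ht
    exact intervalIntegral.integral_hasDerivAt_right (hint t ht)
      ((hconth.stronglyMeasurableAtFilter isOpen_Ioi) t ht) (hcontAt t ht)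
  -- derivative of f₁ on Ioi 0
  set φ : ℝ → ℝ := fun u => F u + deriv g (Real.log u) / u with hφ
  have hf₁d : ∀ t > (0:ℝ), HasDerivAt f₁ (φ t) t := by
    intro t ht
    have hmul : HasDerivAt (fun u => u * F u) (1 * F t + t * h t) t :=
      (hasDerivAt_id t).mul (hFd t ht)
    have heq : f₁ =ᶠ[nhds t] fun u => u * F u := by
      filter_upwards [Ioi_mem_nhds ht] with u hu
      exact hf₁ u hu
    have := hmul.congr_of_eventuallyEq heq
    refine this.congr_deriv ?_
    simp only [hφ, hh]
    field_simp
    try ring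
  -- second derivative
  have hf₁dd : ∀ t > (0:ℝ), HasDerivAt (deriv f₁) (deriv (deriv g) (Real.log t) / t ^ 2) t := by
    intro t ht
    have hnum : HasDerivAt (fun u => deriv g (Real.log u)) (deriv (deriv g) (Real.log t) * t⁻¹) t :=
      ((hdgd (Real.log t)).hasDerivAt).comp t (Real.hasDerivAt_log ht.ne')
    have hdiv : HasDerivAt (fun u => deriv g (Real.log u) / u)
        ((deriv (deriv g) (Real.log t) * t⁻¹ * t - deriv g (Real.log t) * 1) / t ^ 2) t :=
      hnum.div (hasDerivAt_id t) ht.ne'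
    have hφd : HasDerivAt φ (deriv (deriv g) (Real.log t) / t ^ 2) t := by
      have := (hFd t ht).add hdiv
      refine this.congr_deriv ?_
      simp only [hh]
      field_simp
      try ring
    apply hφd.congr_of_eventuallyEq
    filter_upwards [Ioi_mem_nhds ht] with u hu
    exact ((hf₁d u hu).deriv).symm ▸ rfl
  refine ⟨?_, ?_, hf₁dd, ?_⟩
  · rw [hf₁ 1 one_pos]; simp
  · have := hf₁d 1 one_pos
    convert this using 1
    simp [hφ, hF]
  · constructor
    · intro hconv
      have hmono : MonotoneOn (deriv f₁) (Set.Ioi 0) :=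
        hconv.monotoneOn_deriv fun t ht => (hf₁d t ht).differentiableAt
      have hgdd : ∀ x : ℝ, 0 ≤ deriv (deriv g) x := by
        intro x
        have ht : Real.exp x ∈ Set.Ioi (0:ℝ) := Real.exp_pos x
        have h0 : 0 ≤ deriv (deriv g) (Real.log (Real.exp x)) / (Real.exp x) ^ 2 :=
          aux_deriv_nonneg isOpen_Ioi hmono ht (hf₁dd _ (Real.exp_pos x))
        rw [Real.log_exp] at h0
        have hp : (0:ℝ) < (Real.exp x) ^ 2 := by positivity
        calc (0:ℝ) ≤ deriv (deriv g) x / (Real.exp x) ^ 2 * (Real.exp x) ^ 2 := by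
              exact mul_nonneg h0 hp.le
          _ = deriv (deriv g) x := by field_simp
      apply convexOn_of_deriv2_nonneg convex_univ hg.continuous.continuousOn
        (hg.differentiable (by norm_num)).differentiableOn hdgd.differentiableOn
      intro x _
      simpa [Function.iterate_succ, Function.comp] using hgdd x
    · intro hconv
      have hmono : MonotoneOn (deriv g) Set.univ :=
        hconv.monotoneOn_deriv fun x _ => (hg.differentiable (by norm_num)) x
      have hgdd : ∀ x : ℝ, 0 ≤ deriv (deriv g) x := fun x =>
        aux_deriv_nonneg isOpen_univ hmono (Set.mem_univ x) ((hdgd x).hasDerivAt)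
      apply convexOn_of_hasDerivWithinAt2_nonneg (convex_Ioi (0:ℝ))
        (f' := φ) (f'' := fun u => deriv (deriv g) (Real.log u) / u ^ 2)
      · exact fun t ht => (hf₁d t ht).continuousAt.continuousWithinAt
      · rw [interior_Ioi]
        exact fun x hx => ((hf₁d x hx).hasDerivWithinAt)
      · rw [interior_Ioi]
        exact fun x hx => ((hf₁dd x hx).congr_of_eventuallyEq (by
          filter_upwards [Ioi_mem_nhds hx] with u hu
          exact ((hf₁d u hu).deriv).symm ▸ rfl)
          ).hasDerivWithinAt
      · rw [interior_Ioi]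
        intro x hx
        exact div_nonneg (hgdd _) (by positivity)
end

section
/- Let f : ℝ → ℝ be continuously differentiable on the interval (0, ∞) with f(1) = 0, and define g : ℝ → ℝ by g(t) = f(eᵗ) − ∫_1^{eᵗ} f(s)/s ds. Then: (i) g(0) = 0; (ii) for every t ∈ ℝ, g is differentiable at t with g'(t) = eᵗ · f'(eᵗ) − f(eᵗ); and (iii) for every t > 0, t · ∫_1^t g'(log s)/s² ds = f(t). -/
open Real

theorem stmt_6 (f : ℝ → ℝ) (hf : ContDiffOn ℝ 1 f (Set.Ioi (0:ℝ))) (hf1 : f 1 = 0)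
    (g : ℝ → ℝ) (hg : ∀ t : ℝ, g t = f (Real.exp t) - ∫ s in (1:ℝ)..(Real.exp t), f s / s) :
    g 0 = 0 ∧
    (∀ t : ℝ, HasDerivAt g (Real.exp t * deriv f (Real.exp t) - f (Real.exp t)) t) ∧
    (∀ t > (0:ℝ), t * ∫ s in (1:ℝ)..t, deriv g (Real.log s) / s ^ 2 = f t) := by
  have hfd : DifferentiableOn ℝ f (Set.Ioi 0) := hf.differentiableOn one_ne_zero
  have hdiff : ∀ x : ℝ, 0 < x → HasDerivAt f (deriv f x) x := fun x hx =>
    ((hfd x hx).differentiableAt (Ioi_mem_nhds hx)).hasDerivAt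
  have hderivcont : ContinuousOn (deriv f) (Set.Ioi 0) :=
    hf.continuousOn_deriv_of_isOpen isOpen_Ioi le_rfl
  have hfcont : ContinuousOn f (Set.Ioi 0) := hf.continuousOn
  have hdivcont : ContinuousOn (fun s => f s / s) (Set.Ioi 0) :=
    hfcont.div continuousOn_id (fun x hx => ne_of_gt hx)
  have hgd : ∀ t : ℝ, HasDerivAt g (Real.exp t * deriv f (Real.exp t) - f (Real.exp t)) t := by
    intro t
    have hx : (0:ℝ) < Real.exp t := Real.exp_pos t
    have hsub : Set.uIcc (1:ℝ) (Real.exp t) ⊆ Set.Ioi 0 := by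
      intro s hs
      have h1 : min 1 (Real.exp t) ≤ s := hs.1
      exact lt_of_lt_of_le (lt_min one_pos hx) h1
    have hint : IntervalIntegrable (fun s => f s / s) MeasureTheory.volume 1 (Real.exp t) :=
      (hdivcont.mono hsub).intervalIntegrable
    have hmeas : StronglyMeasurableAtFilter (fun s => f s / s) (nhds (Real.exp t))
        MeasureTheory.volume :=
      hdivcont.stronglyMeasurableAtFilter isOpen_Ioi _ hx
    have hcontAt : ContinuousAt (fun s => f s / s) (Real.exp t) :=
      hdivcont.continuousAt (Ioi_mem_nhds hx)
    have hI : HasDerivAt (fun u => ∫ s in (1:ℝ)..u, f s / s)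
        (f (Real.exp t) / Real.exp t) (Real.exp t) :=
      intervalIntegral.integral_hasDerivAt_right hint hmeas hcontAt
    have hF : HasDerivAt (fun x => f x - ∫ s in (1:ℝ)..x, f s / s)
        (deriv f (Real.exp t) - f (Real.exp t) / Real.exp t) (Real.exp t) :=
      (hdiff _ hx).sub hI
    have hcomp := hF.comp t (Real.hasDerivAt_exp t)
    have heq : g =ᶠ[nhds t]
        (fun x => f x - ∫ s in (1:ℝ)..x, f s / s) ∘ Real.exp :=
      Filter.Eventually.of_forall fun x => hg x
    have := hcomp.congr_of_eventuallyEq heq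
    refine this.congr_deriv ?_
    field_simp
  refine ⟨?_, hgd, ?_⟩
  · rw [hg 0]
    simp [hf1]
  · intro t ht
    have hsub : Set.uIcc (1:ℝ) t ⊆ Set.Ioi 0 := by
      intro s hs
      have h1 : min 1 t ≤ s := hs.1
      exact lt_of_lt_of_le (lt_min one_pos ht) h1
    have key : ∀ x ∈ Set.uIcc (1:ℝ) t,
        HasDerivAt (fun s => f s / s) (deriv f x / x - f x / x ^ 2) x := by
      intro x hx'
      have hx0 : 0 < x := hsub hx'
      have h := (hdiff x hx0).div (hasDerivAt_id x) hx0.ne'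
      refine h.congr_deriv ?_
      simp only [id]
      field_simp
    have hintD : IntervalIntegrable (fun x => deriv f x / x - f x / x ^ 2)
        MeasureTheory.volume 1 t := by
      apply ContinuousOn.intervalIntegrable
      apply ContinuousOn.sub
      · exact (hderivcont.mono hsub).div continuousOn_id
          (fun x hx => (hsub hx).ne')
      · exact (hfcont.mono hsub).div ((continuous_pow 2).continuousOn)
          (fun x hx => pow_ne_zero 2 (hsub hx).ne')
    have hFTC := intervalIntegral.integral_eq_sub_of_hasDerivAt key hintD
    have hcongr : (∫ s in (1:ℝ)..t, deriv g (Real.log s) / s ^ 2)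
        = ∫ s in (1:ℝ)..t, deriv f s / s - f s / s ^ 2 := by
      apply intervalIntegral.integral_congr
      intro s hs
      have hs0 : 0 < s := hsub hs
      have hd := (hgd (Real.log s)).deriv
      show deriv g (Real.log s) / s ^ 2 = deriv f s / s - f s / s ^ 2
      rw [hd, Real.exp_log hs0]
      field_simp
    rw [hcongr, hFTC, hf1]
    field_simp
    ring
end
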